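/- Let G ⊂ PGL₂(ℂ) × PGL₃(ℂ) be the subgroup preserving γ_c = {x₁y₁² + x₂y₂² = 0, y₃ = 0} ⊂ P¹ × P², and let m = {y₁ = y₂} ⊂ P². An element (A, B) ∈ G preserves the line m if and only if it is represented by matrices of the form (a) A = I₂, B = [[1,0,b₁],[0,1,b₁],[0,0,a₂]], or (b) A = [[0,1],[1,0]], B = [[0,1,b₁],[1,0,b₁],[0,0,a₂]], where a₂ ∈ ℂ* and b₁ ∈ ℂ. These elements form a subgroup Γ isomorphic to (ℤ/2 × G_a) ⋊ G_m, generated by: the G_m-elements (I₂, diag(1,1,a)) for a ∈ ℂ*, the G_a-elements (I₂, [[1,0,b],[0,1,b],[0,0,1]]) for b ∈ ℂ, and the involution ([[0,1],[1,0]], [[0,1,0],[1,0,0],[0,0,1]]). -/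

import Mathlib

/-!
Statement 8: the subgroup `Γ ⊂ G` of elements preserving the line `m = {y₁ = y₂} ⊂ ℙ²`:
characterization by explicit matrices, `Γ ≅ (ℤ/2 × G_a) ⋊ G_m`, and generators.

We realize everything at the level of `GL`-lifts: an element of `PGL₂ × PGL₃` is
represented by a pair of matrices iff any lift is a pair of nonzero scalar multiples of
them.  Thus `G` is the set of lifts of elements of the form (i)/(ii) of Statement 6,
`Γ` the set of lifts of the forms (a)/(b) below; the quotient of the subgroup `Γ` by
the scalar pairs (which is `Γ` as a subgroup of `PGL₂ × PGL₃`) is isomorphic to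
`(ℤ/2 × G_a) ⋊ G_m`.
-/

noncomputable section
open scoped Matrix

/-- The complex projective plane. -/
abbrev P2C : Type := Projectivization ℂ (Fin 3 → ℂ)

/-- The action of an invertible matrix on projective space. -/
def matAct {n : ℕ} (A : GL (Fin n) ℂ) :
    Projectivization ℂ (Fin n → ℂ) → Projectivization ℂ (Fin n → ℂ) :=
  Projectivization.map ((A : Matrix (Fin n) (Fin n) ℂ).mulVecLin) (by
    intro x y h
    have h2 := congrArg (fun v => (↑(A⁻¹) : Matrix (Fin n) (Fin n) ℂ) *ᵥ v) h
    simp only [Matrix.mulVecLin_apply, Matrix.mulVec_mulVec] at h2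
    rw [A.inv_mul] at h2
    simpa using h2)

/-- The group `G` preserving `γ_c`, described by its explicit matrix lifts (the forms
(i) and (ii) of Corollary 2.5). -/
def Ggrp : Set (GL (Fin 2) ℂ × GL (Fin 3) ℂ) :=
  {g | ∃ (a₁ a₂ b₁ b₂ c d : ℂ), a₁ ≠ 0 ∧ a₂ ≠ 0 ∧ c ≠ 0 ∧ d ≠ 0 ∧
    (((g.1 : Matrix (Fin 2) (Fin 2) ℂ) = c • !![a₁ ^ 2, 0; 0, 1] ∧
      (g.2 : Matrix (Fin 3) (Fin 3) ℂ) = d • !![1, 0, b₁; 0, a₁, b₂; 0, 0, a₂]) ∨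
     ((g.1 : Matrix (Fin 2) (Fin 2) ℂ) = c • !![0, a₁ ^ 2; 1, 0] ∧
      (g.2 : Matrix (Fin 3) (Fin 3) ℂ) = d • !![0, 1, b₁; a₁, 0, b₂; 0, 0, a₂]))}

/-- The line `m = {y₁ = y₂} ⊂ ℙ²`. -/
def mline : Set P2C := {y | y.rep 0 = y.rep 1}

/-- The set of lifts of elements of the forms (a) and (b): this is the set `Γ` of the
statement. -/
def ΓSet : Set (GL (Fin 2) ℂ × GL (Fin 3) ℂ) :=
  {g | ∃ (a₂ b₁ c d : ℂ), a₂ ≠ 0 ∧ c ≠ 0 ∧ d ≠ 0 ∧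
    (((g.1 : Matrix (Fin 2) (Fin 2) ℂ) = c • (1 : Matrix (Fin 2) (Fin 2) ℂ) ∧
      (g.2 : Matrix (Fin 3) (Fin 3) ℂ) = d • !![1, 0, b₁; 0, 1, b₁; 0, 0, a₂]) ∨
     ((g.1 : Matrix (Fin 2) (Fin 2) ℂ) = c • !![0, 1; 1, 0] ∧
      (g.2 : Matrix (Fin 3) (Fin 3) ℂ) = d • !![0, 1, b₁; 1, 0, b₁; 0, 0, a₂]))}

/-- The scalar pairs: the lifts of the identity of `PGL₂ × PGL₃`. -/
def scalarPairs : Set (GL (Fin 2) ℂ × GL (Fin 3) ℂ) :=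
  {g | ∃ (c d : ℂ), c ≠ 0 ∧ d ≠ 0 ∧
    (g.1 : Matrix (Fin 2) (Fin 2) ℂ) = c • (1 : Matrix (Fin 2) (Fin 2) ℂ) ∧
    (g.2 : Matrix (Fin 3) (Fin 3) ℂ) = d • (1 : Matrix (Fin 3) (Fin 3) ℂ)}

/-- The `G_m`-generators: `(I₂, diag(1,1,a))`, `a ∈ ℂ*`. -/
def gmGens : Set (GL (Fin 2) ℂ × GL (Fin 3) ℂ) :=
  {g | ∃ a : ℂ, a ≠ 0 ∧
    (g.1 : Matrix (Fin 2) (Fin 2) ℂ) = (1 : Matrix (Fin 2) (Fin 2) ℂ) ∧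
    (g.2 : Matrix (Fin 3) (Fin 3) ℂ) = !![1, 0, 0; 0, 1, 0; 0, 0, a]}

/-- The `G_a`-generators: `(I₂, [[1,0,b],[0,1,b],[0,0,1]])`, `b ∈ ℂ`. -/
def gaGens : Set (GL (Fin 2) ℂ × GL (Fin 3) ℂ) :=
  {g | ∃ b : ℂ,
    (g.1 : Matrix (Fin 2) (Fin 2) ℂ) = (1 : Matrix (Fin 2) (Fin 2) ℂ) ∧
    (g.2 : Matrix (Fin 3) (Fin 3) ℂ) = !![1, 0, b; 0, 1, b; 0, 0, 1]}

/-- The `ℤ/2`-generator: `([[0,1],[1,0]], [[0,1,0],[1,0,0],[0,0,1]])`. -/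
def invGens : Set (GL (Fin 2) ℂ × GL (Fin 3) ℂ) :=
  {g | (g.1 : Matrix (Fin 2) (Fin 2) ℂ) = !![0, 1; 1, 0] ∧
    (g.2 : Matrix (Fin 3) (Fin 3) ℂ) = !![0, 1, 0; 1, 0, 0; 0, 0, 1]}


/-! ### Auxiliary machinery -/



/-- the two shapes of 3×3 matrices -/
def M3 (s : Bool) (b a : ℂ) : Matrix (Fin 3) (Fin 3) ℂ :=
  if s then !![0, 1, b; 1, 0, b; 0, 0, a] else !![1, 0, b; 0, 1, b; 0, 0, a]

def A2 (s : Bool) : Matrix (Fin 2) (Fin 2) ℂ :=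
  if s then !![0, 1; 1, 0] else 1

lemma M3_mul (s s' : Bool) (b a b' a' : ℂ) :
    M3 s b a * M3 s' b' a' = M3 (xor s s') (b' + b * a') (a * a') := by
  cases s <;> cases s' <;>
    (ext i j; fin_cases i <;> fin_cases j <;>
      simp [M3, Matrix.mul_apply, Fin.sum_univ_three, Matrix.vecHead, Matrix.vecTail] <;> ring)

lemma A2_mul (s s' : Bool) : A2 s * A2 s' = A2 (xor s s') := by
  cases s <;> cases s' <;>
    (ext i j; fin_cases i <;> fin_cases j <;>
      simp [A2, Matrix.mul_apply, Fin.sum_univ_two, Matrix.vecHead, Matrix.vecTail])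

lemma M3_zero_one : M3 false 0 1 = 1 := by
  ext i j; fin_cases i <;> fin_cases j <;> simp [M3, Matrix.one_apply, Matrix.vecHead, Matrix.vecTail]

lemma mulVec_ne_zero {n : ℕ} (A : GL (Fin n) ℂ) {v : Fin n → ℂ} (hv : v ≠ 0) :
    (A : Matrix (Fin n) (Fin n) ℂ) *ᵥ v ≠ 0 := by
  intro h
  apply hv
  have h2 := congrArg (fun w => (↑(A⁻¹) : Matrix (Fin n) (Fin n) ℂ) *ᵥ w) h
  simp only [Matrix.mulVec_mulVec] at h2
  rw [A.inv_mul] at h2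
  simpa using h2

lemma matAct_mk {n : ℕ} (A : GL (Fin n) ℂ) (v : Fin n → ℂ) (hv : v ≠ 0) :
    matAct A (Projectivization.mk ℂ v hv) =
      Projectivization.mk ℂ ((A : Matrix (Fin n) (Fin n) ℂ) *ᵥ v) (mulVec_ne_zero A hv) :=
  rfl

lemma mem_mline_iff (v : Fin 3 → ℂ) (hv : v ≠ 0) :
    Projectivization.mk ℂ v hv ∈ mline ↔ v 0 = v 1 := by
  obtain ⟨a, ha⟩ := Projectivization.exists_smul_eq_mk_rep ℂ v hv
  have h0 := congrFun ha 0
  have h1 := congrFun ha 1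
  simp only [Pi.smul_apply, Units.smul_def, smul_eq_mul] at h0 h1
  constructor
  · intro h
    have : (a : ℂ) * v 0 = (a : ℂ) * v 1 := by rw [h0, h1]; exact h
    exact mul_left_cancel₀ a.ne_zero this
  · intro h
    show _ = _
    rw [← h0, ← h1, h]

lemma gammaSet_iff (g : GL (Fin 2) ℂ × GL (Fin 3) ℂ) :
    g ∈ ΓSet ↔ ∃ (s : Bool) (a₂ b₁ c d : ℂ), a₂ ≠ 0 ∧ c ≠ 0 ∧ d ≠ 0 ∧
      (g.1 : Matrix (Fin 2) (Fin 2) ℂ) = c • A2 s ∧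
      (g.2 : Matrix (Fin 3) (Fin 3) ℂ) = d • M3 s b₁ a₂ := by
  constructor
  · rintro ⟨a₂, b₁, c, d, ha, hc, hd, (⟨h1, h2⟩ | ⟨h1, h2⟩)⟩
    · exact ⟨false, a₂, b₁, c, d, ha, hc, hd, by simpa [A2] using h1, by simpa [M3] using h2⟩
    · exact ⟨true, a₂, b₁, c, d, ha, hc, hd, by simpa [A2] using h1, by simpa [M3] using h2⟩
  · rintro ⟨s, a₂, b₁, c, d, ha, hc, hd, h1, h2⟩
    cases s
    · exact ⟨a₂, b₁, c, d, ha, hc, hd, Or.inl ⟨by simpa [A2] using h1, by simpa [M3] using h2⟩⟩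
    · exact ⟨a₂, b₁, c, d, ha, hc, hd, Or.inr ⟨by simpa [A2] using h1, by simpa [M3] using h2⟩⟩

lemma A2_sq (s : Bool) : A2 s * A2 s = 1 := by
  rw [A2_mul, Bool.xor_self]; rfl

lemma smul_mul_smul_mat {n : ℕ} (c d : ℂ) (X Y : Matrix (Fin n) (Fin n) ℂ) :
    (c • X) * (d • Y) = (c * d) • (X * Y) := by
  rw [Matrix.smul_mul, Matrix.mul_smul, smul_smul]

lemma M3_mul_inv (s : Bool) (b a : ℂ) (ha : a ≠ 0) :
    M3 s b a * M3 s (-(b / a)) a⁻¹ = 1 := by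
  rw [M3_mul, Bool.xor_self]
  have h1 : -(b / a) + b * a⁻¹ = 0 := by field_simp; ring
  have h2 : a * a⁻¹ = 1 := mul_inv_cancel₀ ha
  rw [h1, h2, M3_zero_one]

lemma M3_inv_mul (s : Bool) (b a : ℂ) (ha : a ≠ 0) :
    M3 s (-(b / a)) a⁻¹ * M3 s b a = 1 := by
  rw [M3_mul, Bool.xor_self]
  have h1 : b + -(b / a) * a = 0 := by field_simp; ring
  have h2 : a⁻¹ * a = 1 := inv_mul_cancel₀ ha
  rw [h1, h2, M3_zero_one]

def Γ' : Subgroup (GL (Fin 2) ℂ × GL (Fin 3) ℂ) where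
  carrier := ΓSet
  one_mem' := (gammaSet_iff 1).2 ⟨false, 1, 0, 1, 1, one_ne_zero, one_ne_zero, one_ne_zero,
    by simp [A2], by rw [M3_zero_one]; simp⟩
  mul_mem' := by
    intro g h hg hh
    obtain ⟨s, a, b, c, d, ha, hc, hd, h1, h2⟩ := (gammaSet_iff g).1 hg
    obtain ⟨s', a', b', c', d', ha', hc', hd', h1', h2'⟩ := (gammaSet_iff h).1 hh
    refine (gammaSet_iff (g * h)).2 ⟨xor s s', a * a', b' + b * a', c * c', d * d',
      mul_ne_zero ha ha', mul_ne_zero hc hc', mul_ne_zero hd hd', ?_, ?_⟩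
    · show ((g.1 * h.1 : GL (Fin 2) ℂ) : Matrix (Fin 2) (Fin 2) ℂ) = _
      rw [Units.val_mul, h1, h1', smul_mul_smul_mat, A2_mul]
    · show ((g.2 * h.2 : GL (Fin 3) ℂ) : Matrix (Fin 3) (Fin 3) ℂ) = _
      rw [Units.val_mul, h2, h2', smul_mul_smul_mat, M3_mul]
  inv_mem' := by
    intro g hg
    obtain ⟨s, a, b, c, d, ha, hc, hd, h1, h2⟩ := (gammaSet_iff g).1 hg
    refine (gammaSet_iff g⁻¹).2 ⟨s, a⁻¹, -(b / a), c⁻¹, d⁻¹,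
      inv_ne_zero ha, inv_ne_zero hc, inv_ne_zero hd, ?_, ?_⟩
    · show ((g.1⁻¹ : GL (Fin 2) ℂ) : Matrix (Fin 2) (Fin 2) ℂ) = _
      rw [Matrix.coe_units_inv]
      refine Matrix.inv_eq_right_inv ?_
      rw [h1, smul_mul_smul_mat, A2_sq, mul_inv_cancel₀ hc, one_smul]
    · show ((g.2⁻¹ : GL (Fin 3) ℂ) : Matrix (Fin 3) (Fin 3) ℂ) = _
      rw [Matrix.coe_units_inv]
      refine Matrix.inv_eq_right_inv ?_
      rw [h2, smul_mul_smul_mat, M3_mul_inv s b a ha, mul_inv_cancel₀ hd, one_smul]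

def mk2 (s : Bool) (c : ℂ) (hc : c ≠ 0) : GL (Fin 2) ℂ :=
  ⟨c • A2 s, c⁻¹ • A2 s,
    by rw [smul_mul_smul_mat, A2_sq, mul_inv_cancel₀ hc, one_smul],
    by rw [smul_mul_smul_mat, A2_sq, inv_mul_cancel₀ hc, one_smul]⟩

def mk3 (s : Bool) (b a d : ℂ) (ha : a ≠ 0) (hd : d ≠ 0) : GL (Fin 3) ℂ :=
  ⟨d • M3 s b a, d⁻¹ • M3 s (-(b / a)) a⁻¹,
    by rw [smul_mul_smul_mat, M3_mul_inv s b a ha, mul_inv_cancel₀ hd, one_smul],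
    by rw [smul_mul_smul_mat, M3_inv_mul s b a ha, inv_mul_cancel₀ hd, one_smul]⟩

@[simp] lemma mk2_val (s : Bool) (c : ℂ) (hc : c ≠ 0) :
    ((mk2 s c hc : GL (Fin 2) ℂ) : Matrix (Fin 2) (Fin 2) ℂ) = c • A2 s := rfl

@[simp] lemma mk3_val (s : Bool) (b a d : ℂ) (ha : a ≠ 0) (hd : d ≠ 0) :
    ((mk3 s b a d ha hd : GL (Fin 3) ℂ) : Matrix (Fin 3) (Fin 3) ℂ) = d • M3 s b a := rfl

lemma closure_eq :
    Γ' = Subgroup.closure (scalarPairs ∪ gmGens ∪ gaGens ∪ invGens) := by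
  apply le_antisymm
  · -- Γ' ≤ closure
    intro g hg
    obtain ⟨s, a, b, c, d, ha, hc, hd, h1, h2⟩ := (gammaSet_iff g).1 hg
    have hw1 : (mk2 false c hc, mk3 false 0 1 d one_ne_zero hd) ∈
        Subgroup.closure (scalarPairs ∪ gmGens ∪ gaGens ∪ invGens) := by
      apply Subgroup.subset_closure
      refine Or.inl (Or.inl (Or.inl ⟨c, d, hc, hd, ?_, ?_⟩))
      · simp [A2]
      · rw [mk3_val, M3_zero_one]
    have hw2 : ((1 : GL (Fin 2) ℂ), mk3 false (b / a) 1 1 one_ne_zero one_ne_zero) ∈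
        Subgroup.closure (scalarPairs ∪ gmGens ∪ gaGens ∪ invGens) := by
      apply Subgroup.subset_closure
      refine Or.inl (Or.inr ⟨b / a, by simp, ?_⟩)
      simp [M3]
    have hw3 : ((1 : GL (Fin 2) ℂ), mk3 false 0 a 1 ha one_ne_zero) ∈
        Subgroup.closure (scalarPairs ∪ gmGens ∪ gaGens ∪ invGens) := by
      apply Subgroup.subset_closure
      refine Or.inl (Or.inl (Or.inr ⟨a, ha, by simp, ?_⟩))
      simp [M3]
    have hw4 : (mk2 s 1 one_ne_zero, mk3 s 0 1 1 one_ne_zero one_ne_zero) ∈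
        Subgroup.closure (scalarPairs ∪ gmGens ∪ gaGens ∪ invGens) := by
      cases s
      · have : (mk2 false 1 one_ne_zero, mk3 false 0 1 1 one_ne_zero one_ne_zero) =
            (1 : GL (Fin 2) ℂ × GL (Fin 3) ℂ) := by
          refine Prod.ext_iff.mpr ⟨Units.ext ?_, Units.ext ?_⟩
          · simp [A2]
          · rw [mk3_val, M3_zero_one]; simp
        rw [this]; exact one_mem _
      · apply Subgroup.subset_closure
        refine Or.inr ⟨?_, ?_⟩
        · simp [A2]
        · rw [mk3_val]; simp [M3]
    have hgw : g = (mk2 false c hc, mk3 false 0 1 d one_ne_zero hd) *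
        ((1 : GL (Fin 2) ℂ), mk3 false (b / a) 1 1 one_ne_zero one_ne_zero) *
        ((1 : GL (Fin 2) ℂ), mk3 false 0 a 1 ha one_ne_zero) *
        (mk2 s 1 one_ne_zero, mk3 s 0 1 1 one_ne_zero one_ne_zero) := by
      refine Prod.ext_iff.mpr ⟨Units.ext ?_, Units.ext ?_⟩
      · show (g.1 : Matrix (Fin 2) (Fin 2) ℂ) = _
        rw [h1]
        simp only [Prod.fst_mul, Units.val_mul, mk2_val, Units.val_one]
        rw [Matrix.mul_one, Matrix.mul_one, smul_mul_smul_mat, A2_mul]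
        simp
      · show (g.2 : Matrix (Fin 3) (Fin 3) ℂ) = _
        rw [h2]
        simp only [Prod.snd_mul, Units.val_mul, mk3_val]
        rw [smul_mul_smul_mat, smul_mul_smul_mat, smul_mul_smul_mat, M3_mul, M3_mul, M3_mul]
        simp only [Bool.false_xor]
        norm_num [div_mul_cancel₀ b ha]
    rw [hgw]
    exact mul_mem (mul_mem (mul_mem hw1 hw2) hw3) hw4
  · -- closure ≤ Γ'
    rw [Subgroup.closure_le]
    rintro g (((⟨c, d, hc, hd, h1, h2⟩ | ⟨a, ha, h1, h2⟩) | ⟨b, h1, h2⟩) | ⟨h1, h2⟩)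
    · exact (gammaSet_iff g).2 ⟨false, 1, 0, c, d, one_ne_zero, hc, hd,
        by simpa [A2] using h1, by rw [M3_zero_one]; exact h2⟩
    · exact (gammaSet_iff g).2 ⟨false, a, 0, 1, 1, ha, one_ne_zero, one_ne_zero,
        by simpa [A2] using h1, by simpa [M3] using h2⟩
    · exact (gammaSet_iff g).2 ⟨false, 1, b, 1, 1, one_ne_zero, one_ne_zero, one_ne_zero,
        by simpa [A2] using h1, by simpa [M3] using h2⟩
    · exact (gammaSet_iff g).2 ⟨true, 1, 0, 1, 1, one_ne_zero, one_ne_zero, one_ne_zero,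
        by simpa [A2] using h1, by simpa [M3] using h2⟩

abbrev Htype := Multiplicative (ZMod 2) × Multiplicative ℂ

def φaut (u : ℂˣ) : MulAut Htype where
  toFun p := (p.1, Multiplicative.ofAdd ((u : ℂ)⁻¹ * p.2.toAdd))
  invFun p := (p.1, Multiplicative.ofAdd ((u : ℂ) * p.2.toAdd))
  left_inv p := by
    refine Prod.ext_iff.mpr ⟨rfl, ?_⟩
    simp [← mul_assoc, mul_inv_cancel₀ u.ne_zero]
  right_inv p := by
    refine Prod.ext_iff.mpr ⟨rfl, ?_⟩
    simp [← mul_assoc, mul_inv_cancel₀ u.ne_zero]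
  map_mul' p q := by
    refine Prod.ext_iff.mpr ⟨rfl, ?_⟩
    simp [mul_add, ← ofAdd_add]

def φ : ℂˣ →* MulAut Htype where
  toFun := φaut
  map_one' := by
    ext p
    · rfl
    · simp [φaut]
  map_mul' u v := by
    ext p
    · rfl
    · show (Multiplicative.ofAdd (((u * v : ℂˣ) : ℂ)⁻¹ * Multiplicative.toAdd p.2) :
          Multiplicative ℂ) =
        Multiplicative.ofAdd ((u : ℂ)⁻¹ * Multiplicative.toAdd ((φaut v) p).2)
      show _ = Multiplicative.ofAdd ((u : ℂ)⁻¹ * ((v : ℂ)⁻¹ * Multiplicative.toAdd p.2))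
      congr 1
      rw [Units.val_mul, mul_inv_rev]
      ring

abbrev SDP := SemidirectProduct Htype ℂˣ φ

@[simp] lemma φ_apply_fst (u : ℂˣ) (p : Htype) : ((φ u) p).1 = p.1 := rfl
@[simp] lemma φ_apply_snd (u : ℂˣ) (p : Htype) :
    ((φ u) p).2 = Multiplicative.ofAdd ((u : ℂ)⁻¹ * p.2.toAdd) := rfl

def toUnit (z : ℂ) : ℂˣ := if h : z = 0 then 1 else Units.mk0 z h

lemma toUnit_val (z : ℂ) (hz : z ≠ 0) : ((toUnit z : ℂˣ) : ℂ) = z := by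
  simp [toUnit, hz]

lemma toUnit_one : toUnit 1 = 1 := by
  ext; rw [toUnit_val 1 one_ne_zero]; rfl

def πfun (g : GL (Fin 2) ℂ × GL (Fin 3) ℂ) : SDP :=
  ⟨(if (g.2 : Matrix (Fin 3) (Fin 3) ℂ) 0 0 = 0 then Multiplicative.ofAdd (1 : ZMod 2) else 1,
    Multiplicative.ofAdd ((g.2 : Matrix (Fin 3) (Fin 3) ℂ) 0 2 /
      (g.2 : Matrix (Fin 3) (Fin 3) ℂ) 2 2)),
   toUnit ((g.2 : Matrix (Fin 3) (Fin 3) ℂ) 2 2 /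
     ((g.2 : Matrix (Fin 3) (Fin 3) ℂ) 0 0 + (g.2 : Matrix (Fin 3) (Fin 3) ℂ) 0 1))⟩

lemma πfun_spec (g : GL (Fin 2) ℂ × GL (Fin 3) ℂ) (s : Bool) (b a d : ℂ)
    (ha : a ≠ 0) (hd : d ≠ 0)
    (h2 : (g.2 : Matrix (Fin 3) (Fin 3) ℂ) = d • M3 s b a) :
    πfun g = ⟨(if s then Multiplicative.ofAdd (1 : ZMod 2) else 1,
      Multiplicative.ofAdd (b / a)), toUnit a⟩ := by
  cases s
  · have c1 : (d • M3 false b a) 0 0 = d := by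
      simp [M3, Matrix.vecHead, Matrix.vecTail]
    have c2 : (d • M3 false b a) 0 1 = 0 := by
      simp [M3, Matrix.vecHead, Matrix.vecTail]
    have c3 : (d • M3 false b a) 0 2 = d * b := by
      simp [M3, Matrix.vecHead, Matrix.vecTail]
    have c4 : (d • M3 false b a) 2 2 = d * a := by
      simp [M3, Matrix.vecHead, Matrix.vecTail]
    unfold πfun
    rw [h2, c1, c2, c3, c4, if_neg hd, add_zero, mul_div_mul_left _ _ hd,
      mul_div_cancel_left₀ _ hd]
    simp
  · have c1 : (d • M3 true b a) 0 0 = 0 := by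
      simp [M3, Matrix.vecHead, Matrix.vecTail]
    have c2 : (d • M3 true b a) 0 1 = d := by
      simp [M3, Matrix.vecHead, Matrix.vecTail]
    have c3 : (d • M3 true b a) 0 2 = d * b := by
      simp [M3, Matrix.vecHead, Matrix.vecTail]
    have c4 : (d • M3 true b a) 2 2 = d * a := by
      simp [M3, Matrix.vecHead, Matrix.vecTail]
    unfold πfun
    rw [h2, c1, c2, c3, c4, if_pos rfl, zero_add, mul_div_mul_left _ _ hd,
      mul_div_cancel_left₀ _ hd]
    simp

lemma πfun_mul (g h : GL (Fin 2) ℂ × GL (Fin 3) ℂ) (hg : g ∈ ΓSet) (hh : h ∈ ΓSet) :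
    πfun (g * h) = πfun g * πfun h := by
  obtain ⟨s, a, b, c, d, ha, hc, hd, h1, h2⟩ := (gammaSet_iff g).1 hg
  obtain ⟨s', a', b', c', d', ha', hc', hd', h1', h2'⟩ := (gammaSet_iff h).1 hh
  have hprod : ((g * h).2 : Matrix (Fin 3) (Fin 3) ℂ)
      = (d * d') • M3 (xor s s') (b' + b * a') (a * a') := by
    show ((g.2 * h.2 : GL (Fin 3) ℂ) : Matrix (Fin 3) (Fin 3) ℂ) = _
    rw [Units.val_mul, h2, h2', smul_mul_smul_mat, M3_mul]
  rw [πfun_spec g s b a d ha hd h2, πfun_spec h s' b' a' d' ha' hd' h2',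
    πfun_spec (g * h) (xor s s') (b' + b * a') (a * a') (d * d')
      (mul_ne_zero ha ha') (mul_ne_zero hd hd') hprod]
  refine SemidirectProduct.ext ?_ ?_
  · rw [SemidirectProduct.mul_left]
    refine Prod.ext_iff.mpr ⟨?_, ?_⟩
    · rw [Prod.fst_mul, φ_apply_fst]
      cases s <;> cases s' <;> simp <;> decide
    · rw [Prod.snd_mul, φ_apply_snd, toUnit_val _ ha, toAdd_ofAdd, ← ofAdd_add]
      congr 1
      field_simp
      ring
  · rw [SemidirectProduct.mul_right]
    ext
    rw [toUnit_val _ (mul_ne_zero ha ha'), Units.val_mul, toUnit_val _ ha, toUnit_val _ ha']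

def π : ↥Γ' →* SDP where
  toFun x := πfun x.1
  map_one' := by
    have h2 : (((1 : ↥Γ') : GL (Fin 2) ℂ × GL (Fin 3) ℂ).2 : Matrix (Fin 3) (Fin 3) ℂ)
        = (1 : ℂ) • M3 false 0 1 := by
      rw [M3_zero_one, one_smul]
      rfl
    show πfun _ = 1
    rw [πfun_spec _ false 0 1 1 one_ne_zero one_ne_zero h2]
    refine SemidirectProduct.ext ?_ ?_
    · simp
    · simpa using toUnit_one
  map_mul' x y := πfun_mul x.1 y.1 x.2 y.2

lemma π_surj : Function.Surjective π := by
  rintro ⟨⟨e, β⟩, u⟩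
  have he : e = 1 ∨ e = Multiplicative.ofAdd 1 := by revert e; decide
  rcases he with he | he
  · refine ⟨⟨(mk2 false 1 one_ne_zero, mk3 false (β.toAdd * u) u 1 u.ne_zero one_ne_zero), ?_⟩, ?_⟩
    · exact (gammaSet_iff _).2 ⟨false, u, β.toAdd * u, 1, 1, u.ne_zero, one_ne_zero, one_ne_zero,
        rfl, rfl⟩
    · show πfun _ = _
      rw [πfun_spec _ false (β.toAdd * u) u 1 u.ne_zero one_ne_zero rfl]
      refine SemidirectProduct.ext ?_ ?_
      · refine Prod.ext_iff.mpr ⟨by simpa using he.symm, ?_⟩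
        show Multiplicative.ofAdd _ = β
        rw [mul_div_cancel_right₀ _ u.ne_zero, ofAdd_toAdd]
      · exact Units.ext (toUnit_val _ u.ne_zero)
  · refine ⟨⟨(mk2 true 1 one_ne_zero, mk3 true (β.toAdd * u) u 1 u.ne_zero one_ne_zero), ?_⟩, ?_⟩
    · exact (gammaSet_iff _).2 ⟨true, u, β.toAdd * u, 1, 1, u.ne_zero, one_ne_zero, one_ne_zero,
        rfl, rfl⟩
    · show πfun _ = _
      rw [πfun_spec _ true (β.toAdd * u) u 1 u.ne_zero one_ne_zero rfl]
      refine SemidirectProduct.ext ?_ ?_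
      · refine Prod.ext_iff.mpr ⟨by simpa using he.symm, ?_⟩
        show Multiplicative.ofAdd _ = β
        rw [mul_div_cancel_right₀ _ u.ne_zero, ofAdd_toAdd]
      · exact Units.ext (toUnit_val _ u.ne_zero)

lemma π_ker (x : ↥Γ') : π x = 1 ↔ (x : GL (Fin 2) ℂ × GL (Fin 3) ℂ) ∈ scalarPairs := by
  obtain ⟨s, a, b, c, d, ha, hc, hd, h1, h2⟩ := (gammaSet_iff x.1).1 x.2
  constructor
  · intro h
    have h' : πfun x.1 = 1 := h
    rw [πfun_spec _ s b a d ha hd h2] at h'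
    have hleft := congrArg SemidirectProduct.left h'
    have hright := congrArg SemidirectProduct.right h'
    simp only [SemidirectProduct.one_left, SemidirectProduct.one_right] at hleft hright
    have hfst := congrArg Prod.fst hleft
    have hsnd := congrArg Prod.snd hleft
    have hs : s = false := by
      cases s
      · rfl
      · exfalso
        revert hfst
        simp only [if_pos rfl]
        decide
    subst hs
    have hb : b = 0 := by
      have : b / a = 0 := by
        have := congrArg Multiplicative.toAdd hsnd
        simpa using this
      rcases div_eq_zero_iff.1 this with h | h
      · exact h
      · exact absurd h ha
    have haa : a = 1 := by
      have := congrArg (Units.val) hright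
      rwa [toUnit_val _ ha, Units.val_one] at this
    exact ⟨c, d, hc, hd, by simpa [A2] using h1,
      by rw [h2, hb, haa, M3_zero_one]⟩
  · rintro ⟨c', d', hc', hd', h1', h2'⟩
    show πfun x.1 = 1
    have h2'' : ((x : GL (Fin 2) ℂ × GL (Fin 3) ℂ).2 : Matrix (Fin 3) (Fin 3) ℂ)
        = d' • M3 false 0 1 := by rw [M3_zero_one]; exact h2'
    rw [πfun_spec _ false 0 1 d' one_ne_zero hd' h2'']
    refine SemidirectProduct.ext ?_ ?_
    · simp
    · simpa using toUnit_one

lemma mk_congr {n : ℕ} (u v : Fin n → ℂ) (hu : u ≠ 0) (hv : v ≠ 0) (h : u = v) :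
    Projectivization.mk ℂ u hu = Projectivization.mk ℂ v hv := by subst h; rfl

lemma mulVec3 (s : Bool) (b a d : ℂ) (u : Fin 3 → ℂ) :
    ((d • M3 s b a) *ᵥ u) 0 = d * ((if s then u 1 else u 0) + b * u 2) ∧
    ((d • M3 s b a) *ᵥ u) 1 = d * ((if s then u 0 else u 1) + b * u 2) := by
  cases s <;> refine ⟨?_, ?_⟩ <;>
    simp [M3, Matrix.mulVec, dotProduct, Fin.sum_univ_three,
      Matrix.vecHead, Matrix.vecTail] <;> ring

lemma hv110 : (![1, 1, 0] : Fin 3 → ℂ) ≠ 0 := by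
  intro h; simpa using congrFun h 0

lemma hv001 : (![0, 0, 1] : Fin 3 → ℂ) ≠ 0 := by
  intro h; simpa using congrFun h 2

lemma gamma_preserves (g : GL (Fin 2) ℂ × GL (Fin 3) ℂ) (hg : g ∈ ΓSet) :
    matAct g.2 '' mline = mline := by
  obtain ⟨s, a, b, c, d, ha, hc, hd, h1, h2⟩ := (gammaSet_iff g).1 hg
  ext y
  constructor
  · rintro ⟨x, hx, rfl⟩
    induction x using Projectivization.ind with
    | h v hv =>
      rw [mem_mline_iff] at hx
      rw [matAct_mk, mem_mline_iff, h2]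
      obtain ⟨e0, e1⟩ := mulVec3 s b a d v
      rw [e0, e1, hx]
  · intro hy
    have hr : y.rep ≠ 0 := Projectivization.rep_nonzero y
    have hy' : y = Projectivization.mk ℂ y.rep hr := (Projectivization.mk_rep y).symm
    have hr01 : y.rep 0 = y.rep 1 := hy
    set w : Fin 3 → ℂ := ((g.2⁻¹ : GL (Fin 3) ℂ) : Matrix (Fin 3) (Fin 3) ℂ) *ᵥ y.rep with hw
    have hwne : w ≠ 0 := mulVec_ne_zero g.2⁻¹ hr
    have hBw : (g.2 : Matrix (Fin 3) (Fin 3) ℂ) *ᵥ w = y.rep := by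
      rw [hw, Matrix.mulVec_mulVec, ← Units.val_mul, mul_inv_cancel, Units.val_one,
        Matrix.one_mulVec]
    have hw01 : w 0 = w 1 := by
      obtain ⟨e0, e1⟩ := mulVec3 s b a d w
      rw [h2] at hBw
      have f0 := (congrFun hBw 0).trans (hr01.trans (congrFun hBw 1).symm)
      rw [e0, e1] at f0
      have f2 := add_right_cancel (mul_left_cancel₀ hd f0)
      cases s
      · exact f2
      · exact f2.symm
    refine ⟨Projectivization.mk ℂ w hwne, (mem_mline_iff w hwne).2 hw01, ?_⟩
    rw [matAct_mk, hy']
    exact mk_congr _ _ _ _ hBw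

lemma gamma_of_preserves (g : GL (Fin 2) ℂ × GL (Fin 3) ℂ) (hg : g ∈ Ggrp)
    (himg : matAct g.2 '' mline = mline) : g ∈ ΓSet := by
  obtain ⟨a₁, a₂, b₁, b₂, c, d, ha1, ha2, hc, hd, hcase⟩ := hg
  have key : ∀ (v : Fin 3 → ℂ) (hv : v ≠ 0), v 0 = v 1 →
      ((g.2 : Matrix (Fin 3) (Fin 3) ℂ) *ᵥ v) 0 = ((g.2 : Matrix (Fin 3) (Fin 3) ℂ) *ᵥ v) 1 := by
    intro v hv h01
    have h1 : Projectivization.mk ℂ v hv ∈ mline := (mem_mline_iff v hv).2 h01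
    have h2 : matAct g.2 (Projectivization.mk ℂ v hv) ∈ mline := by
      rw [← himg]; exact Set.mem_image_of_mem _ h1
    rw [matAct_mk, mem_mline_iff] at h2
    exact h2
  rcases hcase with ⟨h1, h2⟩ | ⟨h1, h2⟩
  · have k1 := key ![1, 1, 0] hv110 rfl
    have k2 := key ![0, 0, 1] hv001 rfl
    rw [h2] at k1 k2
    simp [Matrix.mulVec, dotProduct, Fin.sum_univ_three,
      Matrix.vecHead, Matrix.vecTail] at k1 k2
    -- k1 : d = d * a₁  (or similar), k2 : d * b₁ = d * b₂
    have ha1' : a₁ = 1 :=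
      (mul_left_cancel₀ hd (by rw [mul_one]; exact k1)).symm
    have hb : b₁ = b₂ := k2.resolve_right hd
    refine ⟨a₂, b₁, c, d, ha2, hc, hd, Or.inl ⟨?_, ?_⟩⟩
    · rw [h1, ha1', one_pow, Matrix.one_fin_two]
    · rw [h2, ha1', hb]
  · have k1 := key ![1, 1, 0] hv110 rfl
    have k2 := key ![0, 0, 1] hv001 rfl
    rw [h2] at k1 k2
    simp [Matrix.mulVec, dotProduct, Fin.sum_univ_three,
      Matrix.vecHead, Matrix.vecTail] at k1 k2
    have ha1' : a₁ = 1 :=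
      (mul_left_cancel₀ hd (by rw [mul_one]; exact k1)).symm
    have hb : b₁ = b₂ := k2.resolve_right hd
    refine ⟨a₂, b₁, c, d, ha2, hc, hd, Or.inr ⟨?_, ?_⟩⟩
    · rw [h1, ha1', one_pow]
    · rw [h2, ha1', hb]


/-- An element `(A,B) ∈ G` preserves the line `m = {y₁ = y₂}` iff it
is represented by matrices of the forms (a) or (b); these elements form a subgroup `Γ`
which, modulo scalars, is isomorphic to `(ℤ/2 × G_a) ⋊ G_m` and is generated (modulo
scalars) by the `G_m`-, `G_a`- and `ℤ/2`-elements listed above. -/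
theorem stabilizer_of_line_m :
    -- the characterization of Γ inside G:
    (∀ g ∈ Ggrp, (matAct g.2 '' mline = mline ↔ g ∈ ΓSet)) ∧
    -- Γ is a subgroup (of the group of matrix lifts), generated by the scalar pairs
    -- together with the three families of elements above:
    (∃ Γ : Subgroup (GL (Fin 2) ℂ × GL (Fin 3) ℂ),
      (Γ : Set (GL (Fin 2) ℂ × GL (Fin 3) ℂ)) = ΓSet ∧
      Γ = Subgroup.closure (scalarPairs ∪ gmGens ∪ gaGens ∪ invGens) ∧
      -- modulo scalars, Γ is isomorphic to (ℤ/2 × G_a) ⋊ G_m: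
      ∃ (φ : ℂˣ →* MulAut (Multiplicative (ZMod 2) × Multiplicative ℂ))
        (π : Γ →* SemidirectProduct (Multiplicative (ZMod 2) × Multiplicative ℂ) ℂˣ φ),
        Function.Surjective π ∧ ∀ x : Γ, π x = 1 ↔ (x : GL (Fin 2) ℂ × GL (Fin 3) ℂ) ∈ scalarPairs) := by
  refine ⟨fun g hg => ⟨gamma_of_preserves g hg, gamma_preserves g⟩, Γ', rfl, closure_eq,
    φ, π, π_surj, π_ker⟩
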